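/- Amplitude-variation bound for the STFT of a modulated signal: let x(k) = A(k)e^{2πiφ(k)/N} with A: ℝ → ℝ differentiable and φ: ℝ → ℝ twice differentiable, and let x₀(k) = A(n)e^{(2πi/N)[φ(n) + φ'(n)(k−n)]} be its linearization at a fixed n. Then for every l, |V_g x(n,l) − V_g x₀(n,l)| ≤ ‖A'‖_∞·Σ_{k=0}^{N-1}|g(k−n)||k−n| + π|A(n)|·‖φ''‖_∞·(1/N)·Σ_{k=0}^{N-1}|g(k−n)||k−n|², where in the STFT sum the sample indices k range over 0,...,N−1 (no periodization of A, φ). -/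

import Mathlib

open Complex Finset

/-- Modified finite STFT: `V_g x (n,l) = ∑_k x(k) conj(g(k-n)) e^{-2πil(k-n)/N}`, indices mod N. -/
noncomputable def Vstft {N : ℕ} [NeZero N] (g x : ZMod N → ℂ) (n l : ZMod N) : ℂ :=
  ∑ k : ZMod N, x k * (starRingEnd ℂ) (g (k - n)) *
    Complex.exp (-(2 * (Real.pi : ℂ) * Complex.I) * ((l.val : ℂ) * (((k - n : ZMod N)).val : ℂ)) / (N : ℂ))

/-- Discrete Fourier transform: `ĝ(m) = ∑_n g(n) e^{-2πimn/N}`. -/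
noncomputable def dft {N : ℕ} [NeZero N] (g : ZMod N → ℂ) (m : ZMod N) : ℂ :=
  ∑ n : ZMod N, g n *
    Complex.exp (-(2 * (Real.pi : ℂ) * Complex.I) * ((m.val : ℂ) * ((n.val : ℂ))) / (N : ℂ))

/-- Lipschitz bound for `t ↦ exp (t * I)`. -/
lemma expI_lip (a b : ℝ) :
    ‖Complex.exp ((a : ℂ) * Complex.I) - Complex.exp ((b : ℂ) * Complex.I)‖ ≤ |a - b| := by
  have hder : ∀ t : ℝ, HasDerivAt (fun s : ℝ => Complex.exp ((s : ℂ) * Complex.I))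
      (Complex.I * Complex.exp ((t : ℂ) * Complex.I)) t := by
    intro t
    have h1 : HasDerivAt (fun z : ℂ => Complex.exp (z * Complex.I))
        (Complex.exp ((t : ℂ) * Complex.I) * Complex.I) (t : ℂ) := by
      simpa using ((hasDerivAt_id (t : ℂ)).mul_const Complex.I).cexp
    simpa [mul_comm] using h1.comp_ofReal
  have := (convex_univ : Convex ℝ (Set.univ : Set ℝ)).norm_image_sub_le_of_norm_hasDerivWithin_le
    (f := fun s : ℝ => Complex.exp ((s : ℂ) * Complex.I))
    (f' := fun t : ℝ => Complex.I * Complex.exp ((t : ℂ) * Complex.I)) (C := 1)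
    (fun t _ => (hder t).hasDerivWithinAt)
    (fun t _ => by simp [Complex.norm_exp_ofReal_mul_I]) (Set.mem_univ b) (Set.mem_univ a)
  simpa [Real.norm_eq_abs] using this

lemma taylor_core {φ : ℝ → ℝ} (hφ : ContDiff ℝ 2 φ) {C lo hi a x : ℝ}
    (hC : ∀ t ∈ Set.Icc lo hi, |deriv (deriv φ) t| ≤ C)
    (ha : a ∈ Set.Icc lo hi) (hx : x ∈ Set.Icc lo hi) (hax : a ≤ x) :
    |φ x - φ a - deriv φ a * (x - a)| ≤ C * (x - a) ^ 2 / 2 := by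
  rcases eq_or_lt_of_le hax with rfl | hlt
  · simp
  have hsub : Set.Icc a x ⊆ Set.Icc lo hi := Set.Icc_subset_Icc ha.1 hx.2
  have hu : UniqueDiffOn ℝ (Set.Icc a x) := uniqueDiffOn_Icc hlt
  have hdφ : Differentiable ℝ (deriv φ) := by
    have h2 : ContDiff ℝ (1 + 1 : ℕ) φ := by exact_mod_cast hφ
    exact ((contDiff_succ_iff_deriv.mp h2).2.2).differentiable one_ne_zero
  have hφd : Differentiable ℝ φ := hφ.differentiable two_ne_zero
  -- identify iterated derivatives within
  have hiter1 : ∀ y ∈ Set.Icc a x, iteratedDerivWithin 1 φ (Set.Icc a x) y = deriv φ y := by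
    intro y hy
    rw [iteratedDerivWithin_one]
    exact (hφd y).derivWithin (hu y hy)
  have hiter2 : ∀ y ∈ Set.Icc a x, iteratedDerivWithin 2 φ (Set.Icc a x) y = deriv (deriv φ) y := by
    intro y hy
    rw [show (2:ℕ) = 1+1 from rfl, iteratedDerivWithin_succ]
    rw [derivWithin_congr hiter1 (hiter1 y hy)]
    exact (hdφ y).derivWithin (hu y hy)
  have hdiff1 : DifferentiableOn ℝ (iteratedDerivWithin 1 φ (Set.Icc a x)) (Set.Ioo a x) := by
    refine DifferentiableOn.congr (f := deriv φ) (hdφ.differentiableOn) ?_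
    intro y hy
    exact (hiter1 y (Set.Ioo_subset_Icc_self hy)).symm ▸ rfl
  obtain ⟨x', hx', hmain⟩ := taylor_mean_remainder_lagrange (f := φ) (n := 1) hlt.ne
    (hφ.contDiffOn.of_le (by norm_num)) (by rw [Set.uIcc_of_le hax, Set.uIoo_of_le hax]; exact hdiff1)
  rw [Set.uIcc_of_le hax] at hmain
  rw [Set.uIoo_of_le hax] at hx'
  have htay : taylorWithinEval φ 1 (Set.Icc a x) a x = φ a + deriv φ a * (x - a) := by
    rw [taylor_within_apply]
    simp [Finset.sum_range_succ, hiter1 a (Set.left_mem_Icc.mpr hax), smul_eq_mul]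
    ring
  rw [htay] at hmain
  have heq : φ x - φ a - deriv φ a * (x - a) =
      deriv (deriv φ) x' * (x - a) ^ 2 / 2 := by
    have h2 := hiter2 x' (Set.Ioo_subset_Icc_self hx')
    rw [← h2]
    rw [show φ x - φ a - deriv φ a * (x - a) = φ x - (φ a + deriv φ a * (x - a)) by ring, hmain]
    norm_num [Nat.factorial]
  rw [heq]
  rw [abs_div, abs_mul, _root_.abs_of_nonneg (sq_nonneg (x - a))]
  have hC' : |deriv (deriv φ) x'| ≤ C := hC x' (hsub (Set.Ioo_subset_Icc_self hx'))
  have : |(2:ℝ)| = 2 := by norm_num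
  rw [this]
  gcongr

lemma taylor_two {φ : ℝ → ℝ} (hφ : ContDiff ℝ 2 φ) {C lo hi a x : ℝ}
    (hC : ∀ t ∈ Set.Icc lo hi, |deriv (deriv φ) t| ≤ C)
    (ha : a ∈ Set.Icc lo hi) (hx : x ∈ Set.Icc lo hi) :
    |φ x - φ a - deriv φ a * (x - a)| ≤ C * (x - a) ^ 2 / 2 := by
  rcases le_or_gt a x with hax | hax
  · exact taylor_core hφ hC ha hx hax
  · have hψ : ContDiff ℝ 2 (fun t => φ (-t)) := hφ.comp contDiff_neg
    have hd1 : deriv (fun t => φ (-t)) = fun t => -deriv φ (-t) := funext fun t => deriv_comp_neg φ t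
    have hd2 : ∀ t, deriv (deriv (fun t => φ (-t))) t = deriv (deriv φ) (-t) := by
      intro t
      rw [hd1]
      rw [show (fun t => -deriv φ (-t)) = -(fun t => deriv φ (-t)) from rfl]
      rw [deriv.neg, deriv_comp_neg, neg_neg]
    have hC' : ∀ t ∈ Set.Icc (-hi) (-lo), |deriv (deriv (fun t => φ (-t))) t| ≤ C := by
      intro t ht
      rw [hd2]
      exact hC (-t) ⟨by linarith [ht.2], by linarith [ht.1]⟩
    have h := taylor_core hψ hC' (a := -a) (x := -x)
      ⟨by linarith [ha.2], by linarith [ha.1]⟩ ⟨by linarith [hx.2], by linarith [hx.1]⟩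
      (by linarith)
    rw [hd1] at h
    simp only [neg_neg] at h
    have e1 : φ x - φ a - deriv φ a * (x - a) = φ x - φ a - -deriv φ a * (-x - -a) := by ring
    have e2 : C * (x - a) ^ 2 / 2 = C * (-x - -a) ^ 2 / 2 := by ring
    rw [e1, e2]
    exact h

theorem stmt11 (N : ℕ) [NeZero N] (g : ZMod N → ℂ) (A φ : ℝ → ℝ)
    (hA : Differentiable ℝ A) (hφ : ContDiff ℝ 2 φ)
    (CA Cφ : ℝ)
    (hCA : ∀ t ∈ Set.Icc (0 : ℝ) ((N : ℝ) - 1), |deriv A t| ≤ CA)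
    (hCφ : ∀ t ∈ Set.Icc (0 : ℝ) ((N : ℝ) - 1), |deriv (deriv φ) t| ≤ Cφ)
    (n : ℕ) (hn : n < N) (l : ℤ)
    (x x₀ : ℕ → ℂ)
    (hx : ∀ k : ℕ, x k = ((A k : ℝ) : ℂ) *
      Complex.exp (2 * (Real.pi : ℂ) * Complex.I * ((φ k : ℝ) : ℂ) / (N : ℂ)))
    (hx₀ : ∀ k : ℕ, x₀ k = ((A n : ℝ) : ℂ) *
      Complex.exp ((2 * (Real.pi : ℂ) * Complex.I / (N : ℂ)) *
        (((φ n : ℝ) : ℂ) + ((deriv φ n : ℝ) : ℂ) * ((k : ℂ) - (n : ℂ))))) :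
    ‖
      ((∑ k ∈ Finset.range N, x k * (starRingEnd ℂ) (g ((k : ZMod N) - (n : ZMod N))) *
          Complex.exp (-(2 * (Real.pi : ℂ) * Complex.I) * (l : ℂ) * ((k : ℂ) - (n : ℂ)) / (N : ℂ))) -
       (∑ k ∈ Finset.range N, x₀ k * (starRingEnd ℂ) (g ((k : ZMod N) - (n : ZMod N))) *
          Complex.exp (-(2 * (Real.pi : ℂ) * Complex.I) * (l : ℂ) * ((k : ℂ) - (n : ℂ)) / (N : ℂ))))‖ ≤
      CA * (∑ k ∈ Finset.range N, ‖g ((k : ZMod N) - (n : ZMod N))‖ * |(k : ℝ) - (n : ℝ)|) +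
      Real.pi * |A n| * Cφ * (1 / (N : ℝ)) *
        (∑ k ∈ Finset.range N, ‖g ((k : ZMod N) - (n : ZMod N))‖ * ((k : ℝ) - (n : ℝ)) ^ 2) := by
  have hN1 : (1:ℝ) ≤ (N:ℝ) := by exact_mod_cast Nat.one_le_iff_ne_zero.mpr (NeZero.ne N)
  have hNpos : (0:ℝ) < (N:ℝ) := by linarith
  have hNne : (N:ℝ) ≠ 0 := ne_of_gt hNpos
  have hmem : ∀ k : ℕ, k < N → ((k:ℝ)) ∈ Set.Icc (0:ℝ) ((N:ℝ)-1) := by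
    intro k hk
    refine ⟨Nat.cast_nonneg k, ?_⟩
    have : (k:ℝ) + 1 ≤ (N:ℝ) := by exact_mod_cast Nat.succ_le_of_lt hk
    linarith
  have hns := hmem n hn
  have key : ∀ k ∈ Finset.range N, ‖x k - x₀ k‖ ≤
      CA * |(k:ℝ) - (n:ℝ)| + Real.pi * |A n| * Cφ * (1/(N:ℝ)) * ((k:ℝ)-(n:ℝ))^2 := by
    intro k hk
    have hks := hmem k (Finset.mem_range.mp hk)
    rw [hx k, hx₀ k]
    have e1 : 2 * (Real.pi:ℂ) * Complex.I * ((φ k : ℝ):ℂ) / (N:ℂ) =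
        ((2 * Real.pi * φ k / N : ℝ):ℂ) * Complex.I := by push_cast; ring
    have e2 : (2 * (Real.pi:ℂ) * Complex.I / (N:ℂ)) *
        (((φ n : ℝ):ℂ) + ((deriv φ n : ℝ):ℂ) * ((k:ℂ) - (n:ℂ))) =
        ((2 * Real.pi * (φ n + deriv φ n * ((k:ℝ) - (n:ℝ))) / N : ℝ):ℂ) * Complex.I := by
      push_cast; ring
    rw [e1, e2]
    have split : ((A k:ℝ):ℂ) * Complex.exp (((2 * Real.pi * φ k / N : ℝ):ℂ) * Complex.I) -
        ((A n:ℝ):ℂ) * Complex.exp (((2 * Real.pi * (φ n + deriv φ n * ((k:ℝ)-(n:ℝ))) / N : ℝ):ℂ) * Complex.I)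
        = (((A k - A n : ℝ)):ℂ) * Complex.exp (((2 * Real.pi * φ k / N : ℝ):ℂ) * Complex.I) +
          ((A n:ℝ):ℂ) * (Complex.exp (((2 * Real.pi * φ k / N : ℝ):ℂ) * Complex.I) -
            Complex.exp (((2 * Real.pi * (φ n + deriv φ n * ((k:ℝ)-(n:ℝ))) / N : ℝ):ℂ) * Complex.I)) := by
      push_cast; ring
    rw [split]
    refine le_trans (norm_add_le _ _) ?_
    rw [norm_mul, norm_mul, Complex.norm_real, Complex.norm_real, Real.norm_eq_abs, Real.norm_eq_abs, Complex.norm_exp_ofReal_mul_I,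
      mul_one]
    have hAk : |A k - A n| ≤ CA * |(k:ℝ)-(n:ℝ)| := by
      have := (convex_Icc (0:ℝ) ((N:ℝ)-1)).norm_image_sub_le_of_norm_hasDerivWithin_le
        (f := A) (f' := deriv A) (C := CA)
        (fun t _ => ((hA t).hasDerivAt).hasDerivWithinAt)
        (fun t ht => by rw [Real.norm_eq_abs]; exact hCA t ht) hns hks
      simpa [Real.norm_eq_abs] using this
    have hexp : ‖Complex.exp (((2 * Real.pi * φ k / N : ℝ):ℂ) * Complex.I) -
        Complex.exp (((2 * Real.pi * (φ n + deriv φ n * ((k:ℝ)-(n:ℝ))) / N : ℝ):ℂ) * Complex.I)‖ ≤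
        Real.pi * Cφ * ((k:ℝ)-(n:ℝ))^2 / N := by
      refine le_trans (expI_lip _ _) ?_
      have huv : 2 * Real.pi * φ k / N - 2 * Real.pi * (φ n + deriv φ n * ((k:ℝ)-(n:ℝ))) / N =
          2*Real.pi/N * (φ k - φ n - deriv φ n * ((k:ℝ)-(n:ℝ))) := by
        field_simp
        ring
      rw [huv, abs_mul, _root_.abs_of_nonneg (show (0:ℝ) ≤ 2*Real.pi/N by positivity)]
      have h2 := taylor_two hφ hCφ hns hks
      calc 2*Real.pi/N * |φ k - φ n - deriv φ n * ((k:ℝ)-(n:ℝ))|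
          ≤ 2*Real.pi/N * (Cφ * ((k:ℝ)-(n:ℝ))^2/2) := by
            exact mul_le_mul_of_nonneg_left h2 (by positivity)
        _ = Real.pi * Cφ * ((k:ℝ)-(n:ℝ))^2 / N := by ring
    calc |A k - A n| + |A n| * ‖_‖ ≤
        CA * |(k:ℝ)-(n:ℝ)| + |A n| * (Real.pi * Cφ * ((k:ℝ)-(n:ℝ))^2 / N) :=
          add_le_add hAk (mul_le_mul_of_nonneg_left hexp (abs_nonneg _))
      _ = CA * |(k:ℝ)-(n:ℝ)| + Real.pi * |A n| * Cφ * (1/(N:ℝ)) * ((k:ℝ)-(n:ℝ))^2 := by ring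
  rw [← Finset.sum_sub_distrib]
  refine le_trans (norm_sum_le _ _) ?_
  rw [Finset.mul_sum, Finset.mul_sum, ← Finset.sum_add_distrib]
  refine Finset.sum_le_sum ?_
  intro k hk
  have eterm : x k * (starRingEnd ℂ) (g ((k : ZMod N) - (n : ZMod N))) *
        Complex.exp (-(2 * (Real.pi : ℂ) * Complex.I) * (l : ℂ) * ((k : ℂ) - (n : ℂ)) / (N : ℂ)) -
      x₀ k * (starRingEnd ℂ) (g ((k : ZMod N) - (n : ZMod N))) *
        Complex.exp (-(2 * (Real.pi : ℂ) * Complex.I) * (l : ℂ) * ((k : ℂ) - (n : ℂ)) / (N : ℂ)) =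
      (x k - x₀ k) * (starRingEnd ℂ) (g ((k : ZMod N) - (n : ZMod N))) *
        Complex.exp (-(2 * (Real.pi : ℂ) * Complex.I) * (l : ℂ) * ((k : ℂ) - (n : ℂ)) / (N : ℂ)) := by
    ring
  rw [eterm, norm_mul, norm_mul]
  have eexp : -(2 * (Real.pi : ℂ) * Complex.I) * (l : ℂ) * ((k : ℂ) - (n : ℂ)) / (N : ℂ) =
      ((-(2 * Real.pi * l * ((k:ℝ) - (n:ℝ)) / N) : ℝ):ℂ) * Complex.I := by
    push_cast; ring
  rw [eexp, Complex.norm_exp_ofReal_mul_I, mul_one, Complex.norm_conj]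
  have hgnn : (0:ℝ) ≤ ‖g ((k : ZMod N) - (n : ZMod N))‖ := norm_nonneg _
  calc ‖x k - x₀ k‖ * ‖g ((k : ZMod N) - (n : ZMod N))‖
      ≤ (CA * |(k:ℝ) - (n:ℝ)| + Real.pi * |A n| * Cφ * (1/(N:ℝ)) * ((k:ℝ)-(n:ℝ))^2) *
        ‖g ((k : ZMod N) - (n : ZMod N))‖ :=
        mul_le_mul_of_nonneg_right (key k hk) hgnn
    _ = CA * (‖g ((k : ZMod N) - (n : ZMod N))‖ * |(k:ℝ) - (n:ℝ)|) +
        Real.pi * |A n| * Cφ * (1/(N:ℝ)) *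
          (‖g ((k : ZMod N) - (n : ZMod N))‖ * ((k:ℝ)-(n:ℝ))^2) := by ring
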